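/- Spectral variational identity for bounded-degree trees: fix an integer d ≥ 3. (i) For every finite tree T with maximum degree at most d and every vector u = (u_i)_{i∈V(T)} with u_i ≥ 0 and Σ_{i∈V(T)} u_i = 1, one has Σ_{{i,j}∈E(T)} √(u_i u_j) ≤ √(d−1). (ii) The supremum of Σ_{{i,j}∈E(T)} √(u_i u_j) over all such pairs (T, u) equals √(d−1). -/

import Mathlib

open MeasureTheory ProbabilityTheory Filter Real
open scoped ENNReal NNReal

noncomputable section

instance matrixMeasurableSpace {m n α : Type*} [MeasurableSpace α] :
    MeasurableSpace (Matrix m n α) :=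
  inferInstanceAs (MeasurableSpace (m → n → α))

/-- The largest eigenvalue of a real square matrix: the supremum of its real eigenvalues. -/
def lam1 {n : ℕ} (M : Matrix (Fin n) (Fin n) ℝ) : ℝ :=
  sSup {r : ℝ | ∃ v : Fin n → ℝ, v ≠ 0 ∧ M.mulVec v = r • v}

open Classical in
/-- The sum of `f i j` over the undirected edges `{i, j}` of `G`
(assuming `f` is symmetric, each undirected edge is counted once). -/
def edgeSum {m : ℕ} (G : SimpleGraph (Fin m)) (f : Fin m → Fin m → ℝ) : ℝ :=
  (∑ i, ∑ j, if G.Adj i j then f i j else 0) / 2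

/-- The maximum degree of `G` is at most `d`. -/
def MaxDegLE {m : ℕ} (G : SimpleGraph (Fin m)) (d : ℕ) : Prop :=
  ∀ v, {w | G.Adj v w}.ncard ≤ d

namespace TreeAux

section TreeStructure

variable {V : Type*} [DecidableEq V] {G : SimpleGraph V}

/-- In a tree, every path from `r` to `v` has length `dist r v`. -/
lemma path_length_eq_dist (hG : G.IsTree) (r v : V) (p : G.Walk r v) (hp : p.IsPath) :
    p.length = G.dist r v := by
  obtain ⟨q, hq⟩ := (hG.isConnected r v).exists_walk_length_eq_dist
  have hq' : q.IsPath := q.isPath_of_length_eq_dist hq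
  have := (hG.existsUnique_path r v).unique hp hq'
  rw [this, hq]

/-- Adjacent vertices in a tree have different distances to the root. -/
lemma adj_dist_ne (hG : G.IsTree) (r v w : V) (h : G.Adj v w) :
    G.dist r v ≠ G.dist r w := by
  intro heq
  obtain ⟨p, hp⟩ := (hG.isConnected r v).exists_walk_length_eq_dist
  have hpp : p.IsPath := p.isPath_of_length_eq_dist hp
  by_cases hw : w ∈ p.support
  · have h1 : (p.takeUntil w hw).IsPath := hpp.takeUntil hw
    have h2 : (p.takeUntil w hw).length = G.dist r w := path_length_eq_dist hG r w _ h1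
    have h3 := congr_arg SimpleGraph.Walk.length (p.take_spec hw)
    rw [SimpleGraph.Walk.length_append] at h3
    have h4 : (p.dropUntil w hw).length = 0 := by omega
    exact h.ne (SimpleGraph.Walk.eq_of_length_eq_zero h4).symm
  · have hcp : (p.concat h).IsPath := by
      rw [← SimpleGraph.Walk.isPath_reverse_iff, SimpleGraph.Walk.reverse_concat]
      exact hpp.reverse.cons (by simpa [SimpleGraph.Walk.support_reverse] using hw)
    have := path_length_eq_dist hG r w _ hcp
    rw [SimpleGraph.Walk.length_concat] at this
    omega

/-- A vertex in a tree has at most one neighbour strictly closer to the root. -/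
lemma parent_unique (hG : G.IsTree) (r v : V) {w₁ w₂ : V} (h1 : G.Adj v w₁) (h2 : G.Adj v w₂)
    (hd1 : G.dist r w₁ < G.dist r v) (hd2 : G.dist r w₂ < G.dist r v) : w₁ = w₂ := by
  have key : ∀ w : V, G.Adj v w → G.dist r w < G.dist r v →
      ∃ p : G.Walk r w, p.IsPath ∧ v ∉ p.support := by
    intro w hw hdw
    obtain ⟨p, hp⟩ := (hG.isConnected r w).exists_walk_length_eq_dist
    have hpp := p.isPath_of_length_eq_dist hp
    refine ⟨p, hpp, fun hv => ?_⟩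
    have d1 := SimpleGraph.dist_le (p.takeUntil v hv)
    have d2 := SimpleGraph.Walk.length_takeUntil_le p hv
    omega
  obtain ⟨p1, hp1, hv1⟩ := key w₁ h1 hd1
  obtain ⟨p2, hp2, hv2⟩ := key w₂ h2 hd2
  have c1 : (p1.concat h1.symm).IsPath := by
    rw [← SimpleGraph.Walk.isPath_reverse_iff, SimpleGraph.Walk.reverse_concat]
    exact hp1.reverse.cons (by simpa [SimpleGraph.Walk.support_reverse] using hv1)
  have c2 : (p2.concat h2.symm).IsPath := by
    rw [← SimpleGraph.Walk.isPath_reverse_iff, SimpleGraph.Walk.reverse_concat]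
    exact hp2.reverse.cons (by simpa [SimpleGraph.Walk.support_reverse] using hv2)
  have heq := (hG.existsUnique_path r v).unique c1 c2
  have hrev := congr_arg SimpleGraph.Walk.reverse heq
  rw [SimpleGraph.Walk.reverse_concat, SimpleGraph.Walk.reverse_concat] at hrev
  have := congr_arg (fun q : G.Walk v r => q.getVert 1) hrev
  simpa [SimpleGraph.Walk.getVert_cons_succ, SimpleGraph.Walk.getVert_zero] using this


end TreeStructure

lemma acyclic_of_rank {V : Type*} {G : SimpleGraph V} (f : V → ℕ)
    (hne : ∀ v w, G.Adj v w → f v ≠ f w)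
    (hpar : ∀ v w₁ w₂, G.Adj v w₁ → G.Adj v w₂ → f w₁ < f v → f w₂ < f v → w₁ = w₂) :
    G.IsAcyclic := by
  classical
  have aux : ∀ (u : V) (c : G.Walk u u), c.IsCycle → (∀ w ∈ c.support, f w ≤ f u) → False := by
    intro u c hc hmax
    cases c with
    | nil => exact hc.ne_nil rfl
    | @cons _ b _ h p =>
      obtain ⟨hpath, hedge⟩ := (SimpleGraph.Walk.cons_isCycle_iff p h).mp hc
      obtain ⟨y, hy, p', hrev⟩ := SimpleGraph.Walk.exists_eq_cons_of_ne h.ne p.reverse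
      have hyedge : s(u, y) ∈ p.edges := by
        have : s(u, y) ∈ p.reverse.edges := by rw [hrev]; simp
        rwa [SimpleGraph.Walk.edges_reverse, List.mem_reverse] at this
      have hysupp : y ∈ p.support := p.snd_mem_support_of_mem_edges hyedge
      have hbsupp : b ∈ p.support := p.start_mem_support
      have hfy : f y < f u := by
        have h1 := hmax y (by simp [hysupp])
        have h2 := hne u y hy
        omega
      have hfb : f b < f u := by
        have h1 := hmax b (by simp [hbsupp])
        have h2 := hne u b h
        omega
      have heq := hpar u b y h hy hfb hfy
      subst heq
      exact hedge hyedge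
  intro v c hc
  obtain ⟨u, hu, hmax⟩ := Finset.exists_max_image c.support.toFinset f
    ⟨v, by simp [c.start_mem_support]⟩
  rw [List.mem_toFinset] at hu
  refine aux u (c.rotate u hu) (hc.rotate hu) fun w hw => ?_
  rw [SimpleGraph.Walk.support_eq_cons] at hw
  rcases List.mem_cons.mp hw with h | h
  · exact le_of_eq (congrArg f h)
  · have h2 : w ∈ c.support.tail :=
      ((SimpleGraph.Walk.support_rotate c u hu).mem_iff).mp h
    exact hmax w (List.mem_toFinset.mpr (List.mem_of_mem_tail h2))


/-- Vertex set of the complete `q`-ary tree of depth `k`. -/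
abbrev HV (q k : ℕ) := (t : Fin (k+1)) × Fin (q ^ (t : ℕ))

/-- `a` is the parent of `b`. -/
def heapR (q k : ℕ) (a b : HV q k) : Prop :=
  (a.1 : ℕ) + 1 = (b.1 : ℕ) ∧ (b.2 : ℕ) / q = (a.2 : ℕ)

/-- The complete `q`-ary tree of depth `k` as a graph. -/
def heapG (q k : ℕ) : SimpleGraph (HV q k) where
  Adj a b := heapR q k a b ∨ heapR q k b a
  symm := ⟨fun a b h => h.symm⟩
  loopless := ⟨fun a h => by rcases h with ⟨h, -⟩ | ⟨h, -⟩ <;> omega⟩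

lemma hv_ext {q k : ℕ} {a b : HV q k} (h1 : (a.1 : ℕ) = (b.1 : ℕ))
    (h2 : (a.2 : ℕ) = (b.2 : ℕ)) : a = b := by
  obtain ⟨t, i⟩ := a
  obtain ⟨t', i'⟩ := b
  simp only at h1 h2
  have ht : t = t' := Fin.ext h1
  subst ht
  exact congrArg (Sigma.mk t) (Fin.ext h2)

/-- The root. -/
def hroot (q k : ℕ) : HV q k := ⟨0, ⟨0, by simp [Nat.pow_pos]⟩⟩

lemma heap_hne {q k : ℕ} (a b : HV q k) (h : (heapG q k).Adj a b) :
    (a.1 : ℕ) ≠ (b.1 : ℕ) := by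
  rcases h with ⟨h, -⟩ | ⟨h, -⟩ <;> omega

lemma heap_hpar {q k : ℕ} (v w₁ w₂ : HV q k) (h1 : (heapG q k).Adj v w₁)
    (h2 : (heapG q k).Adj v w₂) (l1 : (w₁.1 : ℕ) < (v.1 : ℕ)) (l2 : (w₂.1 : ℕ) < (v.1 : ℕ)) :
    w₁ = w₂ := by
  have r1 : heapR q k w₁ v := by
    rcases h1 with ⟨h, -⟩ | h
    · exact absurd h (by omega)
    · exact h
  have r2 : heapR q k w₂ v := by
    rcases h2 with ⟨h, -⟩ | h
    · exact absurd h (by omega)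
    · exact h
  have a1 := r1.1
  have a2 := r2.1
  exact hv_ext (by omega) (by rw [← r1.2, ← r2.2])

lemma heap_connected {q k : ℕ} (hq : 0 < q) : (heapG q k).Connected := by
  have reach : ∀ (n : ℕ) (a : HV q k), (a.1 : ℕ) = n → (heapG q k).Reachable a (hroot q k) := by
    intro n
    induction n with
    | zero =>
      intro a ha
      have h2 : q ^ (a.1 : ℕ) = 1 := by rw [ha, pow_zero]
      have h3 : (a.2 : ℕ) < 1 := lt_of_lt_of_le a.2.isLt (le_of_eq h2)
      have : a = hroot q k := hv_ext (by simp [hroot, ha]) (by simp [hroot]; omega)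
      rw [this]
    | succ t ih =>
      intro a ha
      have htk : t < k + 1 := by have := a.1.isLt; omega
      have hdiv : (a.2 : ℕ) / q < q ^ t := by
        rw [Nat.div_lt_iff_lt_mul hq, ← pow_succ]
        have h2 : q ^ (a.1 : ℕ) = q ^ (t + 1) := by rw [ha]
        exact lt_of_lt_of_le a.2.isLt (le_of_eq h2)
      set pa : HV q k := ⟨⟨t, htk⟩, ⟨(a.2 : ℕ) / q, hdiv⟩⟩ with hpa
      have hadj : (heapG q k).Adj pa a := Or.inl ⟨by simp [hpa, ha], rfl⟩
      exact (hadj.reachable.symm).trans (ih pa rfl)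
  haveI : Nonempty (HV q k) := ⟨hroot q k⟩
  exact ⟨fun a b => (reach _ a rfl).trans (reach _ b rfl).symm⟩

lemma heap_isTree {q k : ℕ} (hq : 0 < q) : (heapG q k).IsTree :=
  ⟨heap_connected hq,
    acyclic_of_rank (fun a => (a.1 : ℕ)) heap_hne (fun v w₁ w₂ => heap_hpar v w₁ w₂)⟩

lemma heap_deg {q k : ℕ} (hq : 0 < q) (v : HV q k) :
    {w | (heapG q k).Adj v w}.ncard ≤ q + 1 := by
  classical
  have hcard : {w | (heapG q k).Adj v w}.ncard =
      Nat.card {w // (heapG q k).Adj v w} := by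
    rw [← Nat.card_coe_set_eq]
    rfl
  rw [hcard]
  have hinj : Function.Injective (fun w : {w // (heapG q k).Adj v w} =>
      (if h : heapR q k w.1 v then (none : Option (Fin q))
        else some ⟨(w.1.2 : ℕ) % q, Nat.mod_lt _ hq⟩)) := by
    rintro ⟨w₁, hw₁⟩ ⟨w₂, hw₂⟩ hg
    simp only at hg
    by_cases h1 : heapR q k w₁ v <;> by_cases h2 : heapR q k w₂ v
    · have : w₁ = w₂ := hv_ext (by have a1 := h1.1; have a2 := h2.1; omega)
        (by rw [← h1.2, ← h2.2])
      simpa using this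
    · rw [dif_pos h1, dif_neg h2] at hg; exact absurd hg (by simp)
    · rw [dif_neg h1, dif_pos h2] at hg; exact absurd hg (by simp)
    · rw [dif_neg h1, dif_neg h2] at hg
      have hr1 : heapR q k v w₁ := by rcases hw₁ with h | h; · exact h
                                      · exact absurd h h1
      have hr2 : heapR q k v w₂ := by rcases hw₂ with h | h; · exact h
                                      · exact absurd h h2
      have hmod : (w₁.2 : ℕ) % q = (w₂.2 : ℕ) % q := by
        have := Option.some.inj hg
        exact congrArg Fin.val this
      have hdiv : (w₁.2 : ℕ) / q = (w₂.2 : ℕ) / q := by rw [hr1.2, hr2.2]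
      have e1 := Nat.div_add_mod (w₁.2 : ℕ) q
      have e2 := Nat.div_add_mod (w₂.2 : ℕ) q
      have e3 : q * ((w₁.2 : ℕ) / q) = q * ((w₂.2 : ℕ) / q) := by rw [hdiv]
      have : w₁ = w₂ := hv_ext (by have a1 := hr1.1; have a2 := hr2.1; omega) (by omega)
      simpa using this
  have := Nat.card_le_card_of_injective _ hinj
  simpa using this


/-- The weight function on the heap tree. -/
noncomputable def wfun (q k : ℕ) (a : HV q k) : ℝ := ((q:ℝ) ^ (a.1 : ℕ))⁻¹ / (k+1)

lemma wfun_nonneg (q k : ℕ) (a : HV q k) : 0 ≤ wfun q k a := by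
  unfold wfun; positivity

lemma wfun_sum (q k : ℕ) (hq : 0 < q) : ∑ a : HV q k, wfun q k a = 1 := by
  rw [← Finset.univ_sigma_univ, Finset.sum_sigma]
  have hqR : (0:ℝ) < q := by exact_mod_cast hq
  have : ∀ t : Fin (k+1), ∑ j : Fin (q ^ (t:ℕ)), wfun q k ⟨t, j⟩ = 1 / (k+1) := by
    intro t
    have hc : ∀ j : Fin (q ^ (t:ℕ)), wfun q k ⟨t, j⟩ = ((q:ℝ) ^ (t:ℕ))⁻¹ / (k+1) :=
      fun j => rfl
    rw [Finset.sum_congr rfl fun j _ => hc j, Finset.sum_const, Finset.card_univ,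
      Fintype.card_fin, nsmul_eq_mul]
    push_cast
    have h1 : ((q:ℝ) ^ (t:ℕ)) ≠ 0 := by positivity
    field_simp
  rw [Finset.sum_congr rfl (fun t _ => this t), Finset.sum_const, Finset.card_univ,
    Fintype.card_fin, nsmul_eq_mul]
  have : ((k:ℝ) + 1) ≠ 0 := by positivity
  push_cast
  field_simp

open Classical in
lemma heap_S (q k : ℕ) (hq : 0 < q) :
    ∑ a : HV q k, ∑ b : HV q k,
      (if (heapG q k).Adj a b then Real.sqrt (wfun q k a * wfun q k b) else 0)
    = 2 * ((k : ℝ) * Real.sqrt q / (k+1)) := by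
  classical
  have hqR : (0:ℝ) < q := by exact_mod_cast hq
  set F : HV q k → HV q k → ℝ := fun a b => Real.sqrt (wfun q k a * wfun q k b) with hF
  have hFsymm : ∀ a b, F a b = F b a := fun a b => by rw [hF]; simp only; rw [mul_comm]
  -- split the adjacency
  have split : ∀ a b : HV q k, (if (heapG q k).Adj a b then F a b else 0)
      = (if heapR q k a b then F a b else 0) + (if heapR q k b a then F a b else 0) := by
    intro a b
    by_cases h1 : heapR q k a b
    · have h2 : ¬ heapR q k b a := fun h2 => by
        have := h1.1; have := h2.1; omega
      have hadj : (heapG q k).Adj a b := Or.inl h1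
      rw [if_pos hadj, if_pos h1, if_neg h2, add_zero]
    · by_cases h2 : heapR q k b a
      · have hadj : (heapG q k).Adj a b := Or.inr h2
        rw [if_pos hadj, if_neg h1, if_pos h2, zero_add]
      · have hnadj : ¬ (heapG q k).Adj a b := fun h => Or.elim h h1 h2
        rw [if_neg hnadj, if_neg h1, if_neg h2, add_zero]
  -- the half sum, summed as: for each child b, the unique parent term
  have inner : ∀ b : HV q k, (∑ a : HV q k, if heapR q k a b then F a b else 0)
      = (if (b.1:ℕ) = 0 then 0 else Real.sqrt q * ((q:ℝ) ^ ((b.1:ℕ)))⁻¹ / (k+1)) := by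
    intro b
    by_cases hb : (b.1 : ℕ) = 0
    · rw [if_pos hb]
      refine Finset.sum_eq_zero fun a _ => ?_
      refine if_neg fun h => ?_
      have := h.1; omega
    · obtain ⟨t, ht⟩ : ∃ t, (b.1 : ℕ) = t + 1 := ⟨(b.1:ℕ) - 1, by omega⟩
      have htk : t < k + 1 := by have := b.1.isLt; omega
      have hdiv : (b.2 : ℕ) / q < q ^ t := by
        rw [Nat.div_lt_iff_lt_mul hq, ← pow_succ]
        have h2 : q ^ (b.1 : ℕ) = q ^ (t + 1) := by rw [ht]
        exact lt_of_lt_of_le b.2.isLt (le_of_eq h2)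
      set pa : HV q k := ⟨⟨t, htk⟩, ⟨(b.2 : ℕ) / q, hdiv⟩⟩ with hpa
      have hpafst : (pa.1 : ℕ) = t := rfl
      have hpasnd : (pa.2 : ℕ) = (b.2 : ℕ) / q := rfl
      have hR : heapR q k pa b := ⟨by simp [hpa]; omega, hpasnd.symm⟩
      rw [if_neg hb, Finset.sum_eq_single pa]
      · rw [if_pos hR]
        -- compute the square root
        have hw1 : wfun q k pa = ((q:ℝ) ^ t)⁻¹ / (k+1) := by simp [wfun, hpa]
        have hw2 : wfun q k b = ((q:ℝ) ^ (t+1))⁻¹ / (k+1) := by rw [wfun, ht]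
        have key : wfun q k pa * wfun q k b
            = (Real.sqrt q * ((q:ℝ) ^ (t+1))⁻¹ / (k+1))^2 := by
          rw [hw1, hw2, div_pow, mul_pow, Real.sq_sqrt hqR.le, pow_succ]
          have h1 : ((q:ℝ) ^ t) ≠ 0 := by positivity
          have h2 : ((k:ℝ) + 1) ≠ 0 := by positivity
          have h3 : (q:ℝ) ≠ 0 := ne_of_gt hqR
          field_simp
        have goal2 : F pa b = Real.sqrt q * ((q:ℝ) ^ (t+1))⁻¹ / (k+1) := by
          rw [hF]; simp only
          rw [key]
          exact Real.sqrt_sq (by positivity)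
        rw [goal2, ht]
      · intro a _ ha
        refine if_neg fun h => ?_
        have h1 := h.1
        have h2 := h.2
        refine ha (hv_ext ?_ ?_)
        · rw [hpafst]; omega
        · rw [hpasnd]; exact h2.symm
      · intro h
        exact absurd (Finset.mem_univ pa) h
  calc ∑ a : HV q k, ∑ b : HV q k, (if (heapG q k).Adj a b then F a b else 0)
      = ∑ a : HV q k, ∑ b : HV q k,
          ((if heapR q k a b then F a b else 0) + (if heapR q k b a then F a b else 0)) := by
        refine Finset.sum_congr rfl fun a _ => Finset.sum_congr rfl fun b _ => split a b
    _ = (∑ a : HV q k, ∑ b : HV q k, (if heapR q k a b then F a b else 0))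
        + (∑ a : HV q k, ∑ b : HV q k, (if heapR q k b a then F a b else 0)) := by
        rw [← Finset.sum_add_distrib]
        refine Finset.sum_congr rfl fun a _ => ?_
        rw [← Finset.sum_add_distrib]
    _ = 2 * (∑ b : HV q k, ∑ a : HV q k, (if heapR q k a b then F a b else 0)) := by
        have swap2 : (∑ a : HV q k, ∑ b : HV q k, if heapR q k b a then F a b else 0)
            = ∑ a : HV q k, ∑ b : HV q k, if heapR q k a b then F a b else 0 := by
          rw [Finset.sum_comm]
          exact Finset.sum_congr rfl fun a _ => Finset.sum_congr rfl fun b _ =>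
            if_congr Iff.rfl (hFsymm b a) rfl
        rw [swap2, two_mul, Finset.sum_comm]
    _ = 2 * (∑ b : HV q k,
          (if (b.1:ℕ) = 0 then 0 else Real.sqrt q * ((q:ℝ) ^ ((b.1:ℕ)))⁻¹ / (k+1))) := by
        rw [Finset.sum_congr rfl fun b _ => inner b]
    _ = 2 * ((k : ℝ) * Real.sqrt q / (k+1)) := by
        congr 1
        rw [← Finset.univ_sigma_univ, Finset.sum_sigma]
        have hterm : ∀ t : Fin (k+1), ∑ j : Fin (q ^ (t:ℕ)),
            (if ((⟨t, j⟩ : HV q k).1 : ℕ) = 0 then 0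
              else Real.sqrt q * ((q:ℝ) ^ (((⟨t, j⟩ : HV q k).1 : ℕ)))⁻¹ / (k+1))
            = (if (t:ℕ) = 0 then 0 else Real.sqrt q / (k+1)) := by
          intro t
          by_cases ht : (t : ℕ) = 0
          · simp [ht]
          · rw [if_neg ht]
            have hc : ∀ j : Fin (q ^ (t:ℕ)),
                (if ((⟨t, j⟩ : HV q k).1 : ℕ) = 0 then (0:ℝ)
                  else Real.sqrt q * ((q:ℝ) ^ (((⟨t, j⟩ : HV q k).1 : ℕ)))⁻¹ / (k+1))
                = Real.sqrt q * ((q:ℝ) ^ ((t:ℕ)))⁻¹ / (k+1) := fun j => if_neg ht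
            rw [Finset.sum_congr rfl fun j _ => hc j, Finset.sum_const,
              Finset.card_univ, Fintype.card_fin, nsmul_eq_mul]
            push_cast
            have h1 : ((q:ℝ) ^ (t:ℕ)) ≠ 0 := by positivity
            field_simp
        rw [Finset.sum_congr rfl fun t _ => hterm t]
        rw [Fin.sum_univ_succ]
        have : ∀ i : Fin k, (if ((Fin.succ i : Fin (k+1)) : ℕ) = 0 then (0:ℝ)
            else Real.sqrt q / (k+1)) = Real.sqrt q / (k+1) := by
          intro i
          rw [if_neg (by simp [Fin.val_succ])]
        rw [Finset.sum_congr rfl fun i _ => this i, Finset.sum_const, Finset.card_univ,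
          Fintype.card_fin, nsmul_eq_mul]
        rw [if_pos (by simp : (((0 : Fin (k+1)) : ℕ) = 0)), zero_add]
        ring

open Classical in
lemma exists_good (d : ℕ) (hd : 3 ≤ d) (k : ℕ) :
    ∃ (m : ℕ) (T : SimpleGraph (Fin m)) (u : Fin m → ℝ),
      T.IsTree ∧ MaxDegLE T d ∧ (∀ i, 0 ≤ u i) ∧ (∑ i, u i) = 1 ∧
      edgeSum T (fun i j => Real.sqrt (u i * u j))
        = (k:ℝ) * Real.sqrt ((d:ℝ) - 1) / (k+1) := by
  classical
  set q := d - 1 with hqdef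
  have hq : 0 < q := by omega
  have hqd : ((q:ℕ):ℝ) = (d:ℝ) - 1 := by
    rw [hqdef]
    push_cast [Nat.cast_sub (by omega : 1 ≤ d)]
    ring
  set m := Fintype.card (HV q k) with hm
  set e := Fintype.equivFin (HV q k) with he
  set T : SimpleGraph (Fin m) := SimpleGraph.comap (⇑e.symm) (heapG q k) with hT
  set u : Fin m → ℝ := fun i => wfun q k (e.symm i) with hu
  have hmap : ∀ a b : HV q k, (heapG q k).Adj a b → T.Adj (e a) (e b) := by
    intro a b hab
    show (heapG q k).Adj (e.symm (e a)) (e.symm (e b))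
    rwa [Equiv.symm_apply_apply, Equiv.symm_apply_apply]
  refine ⟨m, T, u, ⟨?_, ?_⟩, ?_, fun i => wfun_nonneg q k _, ?_, ?_⟩
  · -- connected
    haveI : Nonempty (Fin m) := ⟨e (hroot q k)⟩
    refine ⟨fun i j => ?_⟩
    let φ : (heapG q k) →g T := ⟨⇑e, fun {a b} h => hmap a b h⟩
    have hr := (heap_connected hq).preconnected (e.symm i) (e.symm j)
    have h2 := hr.map φ
    have hφ : ∀ a, φ a = e a := fun a => rfl
    rw [hφ, hφ, Equiv.apply_symm_apply, Equiv.apply_symm_apply] at h2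
    exact h2
  · -- acyclic
    exact acyclic_of_rank (fun i => (((e.symm i).1 : ℕ)))
      (fun v w h => heap_hne _ _ h)
      (fun v w₁ w₂ h1 h2 l1 l2 => e.symm.injective (heap_hpar _ _ _ h1 h2 l1 l2))
  · -- degree
    intro i
    have himg : {j | T.Adj i j} = ⇑e '' {b | (heapG q k).Adj (e.symm i) b} := by
      ext j
      simp only [Set.mem_setOf_eq, Set.mem_image]
      constructor
      · intro h; exact ⟨e.symm j, h, by simp⟩
      · rintro ⟨b, hb, rfl⟩
        show (heapG q k).Adj (e.symm i) (e.symm (e b))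
        rwa [Equiv.symm_apply_apply]
    rw [himg, Set.ncard_image_of_injective _ e.injective]
    have h2 := heap_deg hq (e.symm i)
    omega
  · -- sum one
    rw [hu]
    exact (Equiv.sum_comp e.symm (wfun q k)).trans (wfun_sum q k hq)
  · -- edge sum
    rw [edgeSum]
    have inner : ∀ a : HV q k, (∑ j, if (heapG q k).Adj a (e.symm j)
        then Real.sqrt (wfun q k a * wfun q k (e.symm j)) else 0)
        = ∑ b : HV q k,
          (if (heapG q k).Adj a b then Real.sqrt (wfun q k a * wfun q k b) else 0) :=
      fun a => Equiv.sum_comp e.symm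
        (fun b => if (heapG q k).Adj a b then Real.sqrt (wfun q k a * wfun q k b) else 0)
    have hconv : (∑ i, ∑ j, if T.Adj i j then Real.sqrt (u i * u j) else 0)
        = ∑ a : HV q k, ∑ b : HV q k,
            (if (heapG q k).Adj a b then Real.sqrt (wfun q k a * wfun q k b) else 0) :=
      calc (∑ i, ∑ j, if T.Adj i j then Real.sqrt (u i * u j) else 0)
          = ∑ i, ∑ b : HV q k, (if (heapG q k).Adj (e.symm i) b
              then Real.sqrt (wfun q k (e.symm i) * wfun q k b) else 0) :=
            Finset.sum_congr rfl fun i _ => inner (e.symm i)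
        _ = _ := Equiv.sum_comp e.symm
          (fun a => ∑ b : HV q k,
            (if (heapG q k).Adj a b then Real.sqrt (wfun q k a * wfun q k b) else 0))
    have h1 : (∑ i, ∑ j, if T.Adj i j then Real.sqrt (u i * u j) else 0)
        = 2 * ((k : ℝ) * Real.sqrt q / (k+1)) := by
      rw [hconv]; convert heap_S q k hq
    have h2 : (∑ i, ∑ j, if T.Adj i j then Real.sqrt (u i * u j) else 0) / 2
        = (k:ℝ) * Real.sqrt ((d:ℝ) - 1) / (k+1) := by
      rw [h1, hqd]; ring
    convert h2


lemma part_one (d : ℕ) (hd : 3 ≤ d) {m : ℕ} (T : SimpleGraph (Fin m)) (hT : T.IsTree)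
    (hdeg : MaxDegLE T d) (u : Fin m → ℝ) (hu : ∀ i, 0 ≤ u i) (hsum : ∑ i, u i = 1) :
    edgeSum T (fun i j => Real.sqrt (u i * u j)) ≤ Real.sqrt ((d : ℝ) - 1) := by
  classical
  set s : ℝ := Real.sqrt ((d:ℝ) - 1) with hs
  have hd1 : (1:ℝ) ≤ (d:ℝ) - 1 := by
    have : (3:ℝ) ≤ (d:ℝ) := by exact_mod_cast hd
    linarith
  have hs2 : s ^ 2 = (d:ℝ) - 1 := Real.sq_sqrt (by linarith)
  have hs1 : 1 ≤ s := by
    have h := Real.sqrt_le_sqrt hd1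
    rwa [Real.sqrt_one] at h
  have hs0 : (0:ℝ) < s := by linarith
  have hsinv : 0 < s⁻¹ := by positivity
  have hst : s * s⁻¹ = 1 := mul_inv_cancel₀ (ne_of_gt hs0)
  obtain ⟨r⟩ := hT.isConnected.nonempty
  set dep : Fin m → ℕ := fun v => T.dist r v with hdep
  set x : Fin m → ℝ := fun i => Real.sqrt (u i) with hx
  have hx0 : ∀ i, 0 ≤ x i := fun i => Real.sqrt_nonneg _
  have hx2 : ∀ i, x i ^ 2 = u i := fun i => Real.sq_sqrt (hu i)
  set c : Fin m → Fin m → ℝ := fun v w => if dep w < dep v then s else s⁻¹ with hc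
  have hcs : ∀ v w, c v w = s⁻¹ + (if dep w < dep v then s - s⁻¹ else 0) := by
    intro v w
    by_cases h : dep w < dep v <;> simp [hc, h]
  -- pointwise AM-GM bound
  have hpt : ∀ v w, T.Adj v w → x v * x w ≤ (c v w * x v ^ 2 + c w v * x w ^ 2) / 2 := by
    intro v w hvw
    have hne : dep v ≠ dep w := adj_dist_ne hT r v w hvw
    rcases lt_or_gt_of_ne hne with h | h
    · have e1 : c v w = s⁻¹ := by simp [hc, Nat.lt_asymm h]
      have e2 : c w v = s := by simp [hc, h]
      rw [e1, e2]
      nlinarith [sq_nonneg (x v - s * x w), hx0 v, hx0 w, hs0, hst, hsinv]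
    · have e1 : c v w = s := by simp [hc, h]
      have e2 : c w v = s⁻¹ := by simp [hc, Nat.lt_asymm h]
      rw [e1, e2]
      nlinarith [sq_nonneg (x w - s * x v), hx0 v, hx0 w, hs0, hst, hsinv]
  -- the three double sums
  set S : ℝ := ∑ v, ∑ w, if T.Adj v w then x v * x w else 0 with hS
  set S1 : ℝ := ∑ v, ∑ w, if T.Adj v w then c v w * x v ^ 2 else 0 with hS1
  set S2 : ℝ := ∑ v, ∑ w, if T.Adj v w then c w v * x w ^ 2 else 0 with hS2
  have hS21 : S2 = S1 := by
    rw [hS2, Finset.sum_comm, hS1]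
    refine Finset.sum_congr rfl fun v _ => Finset.sum_congr rfl fun w _ => ?_
    exact if_congr (T.adj_comm w v) rfl rfl
  have hSle : S ≤ S1 := by
    have h2S : 2 * S ≤ S1 + S2 := by
      rw [hS, hS1, hS2, ← Finset.sum_add_distrib, Finset.mul_sum]
      refine Finset.sum_le_sum fun v _ => ?_
      rw [← Finset.sum_add_distrib, Finset.mul_sum]
      refine Finset.sum_le_sum fun w _ => ?_
      by_cases h : T.Adj v w
      · simp only [if_pos h]
        have := hpt v w h
        linarith
      · simp [h]
    rw [hS21] at h2S; linarith
  -- row sums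
  have hA : ∀ v, (∑ w, if T.Adj v w then c v w else 0) ≤ 2 * s := by
    intro v
    set N : Finset (Fin m) := Finset.univ.filter (fun w => T.Adj v w) with hN
    set P : Finset (Fin m) := N.filter (fun w => dep w < dep v) with hP
    have hNcard : N.card ≤ d := by
      have heq : {w | T.Adj v w} = ↑N := by ext w; simp [hN]
      have h2 := hdeg v
      rwa [heq, Set.ncard_coe_finset] at h2
    have hPcard : P.card ≤ 1 := by
      refine Finset.card_le_one.mpr fun a ha b hb => ?_
      simp only [hP, hN, Finset.mem_filter, Finset.mem_univ, true_and] at ha hb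
      exact parent_unique hT r v ha.1 hb.1 ha.2 hb.2
    have hssinv : 0 ≤ s - s⁻¹ := by nlinarith [hst, hs1, hsinv]
    rw [← Finset.sum_filter, ← hN]
    calc ∑ w ∈ N, c v w
        = ∑ w ∈ N, (s⁻¹ + (if dep w < dep v then s - s⁻¹ else 0)) :=
          Finset.sum_congr rfl fun w _ => hcs v w
      _ = N.card * s⁻¹ + P.card * (s - s⁻¹) := by
          rw [Finset.sum_add_distrib, Finset.sum_const, ← Finset.sum_filter, ← hP,
            Finset.sum_const, nsmul_eq_mul, nsmul_eq_mul]
      _ ≤ d * s⁻¹ + 1 * (s - s⁻¹) := by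
          have h1 : (N.card : ℝ) ≤ d := by exact_mod_cast hNcard
          have h2 : (P.card : ℝ) ≤ 1 := by exact_mod_cast hPcard
          have g1 := mul_le_mul_of_nonneg_right h1 hsinv.le
          have g2 := mul_le_mul_of_nonneg_right h2 hssinv
          linarith
      _ ≤ 2 * s := by
          have hds : ((d:ℝ) - 1) * s⁻¹ = s := by
            rw [← hs2]; field_simp
          nlinarith [hsinv]
  have hS1le : S1 ≤ 2 * s := by
    have : S1 = ∑ v, (∑ w, if T.Adj v w then c v w else 0) * x v ^ 2 := by
      rw [hS1]
      refine Finset.sum_congr rfl fun v _ => ?_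
      rw [Finset.sum_mul]
      refine Finset.sum_congr rfl fun w _ => ?_
      by_cases h : T.Adj v w <;> simp [h]
    rw [this]
    calc ∑ v, (∑ w, if T.Adj v w then c v w else 0) * x v ^ 2
        ≤ ∑ v, (2 * s) * x v ^ 2 := by
          refine Finset.sum_le_sum fun v _ => ?_
          exact mul_le_mul_of_nonneg_right (hA v) (sq_nonneg _)
      _ = 2 * s := by
          rw [← Finset.mul_sum]
          have : ∑ v, x v ^ 2 = 1 := by
            rw [← hsum]; exact Finset.sum_congr rfl fun v _ => hx2 v
          rw [this, mul_one]
  -- conclude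
  have hfin : edgeSum T (fun i j => Real.sqrt (u i * u j)) = S / 2 := by
    rw [edgeSum, hS]
    congr 1
    refine Finset.sum_congr rfl fun v _ => Finset.sum_congr rfl fun w _ => ?_
    refine if_congr Iff.rfl ?_ rfl
    exact Real.sqrt_mul (hu v) _
  rw [hfin]
  linarith


end TreeAux

/-- **Spectral variational identity for bounded-degree trees.** -/
theorem tree_sqrt_functional
    (d : ℕ) (hd : 3 ≤ d) :
    (∀ (m : ℕ) (T : SimpleGraph (Fin m)), T.IsTree → MaxDegLE T d →
      ∀ u : Fin m → ℝ, (∀ i, 0 ≤ u i) → (∑ i, u i) = 1 →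
        edgeSum T (fun i j => Real.sqrt (u i * u j)) ≤ Real.sqrt ((d : ℝ) - 1)) ∧
    sSup {x : ℝ | ∃ (m : ℕ) (T : SimpleGraph (Fin m)) (u : Fin m → ℝ),
        T.IsTree ∧ MaxDegLE T d ∧ (∀ i, 0 ≤ u i) ∧ (∑ i, u i) = 1 ∧
        x = edgeSum T (fun i j => Real.sqrt (u i * u j))} = Real.sqrt ((d : ℝ) - 1) := by
  constructor
  · intro m T hT hdeg u hu hsum
    exact TreeAux.part_one d hd T hT hdeg u hu hsum
  · set s : ℝ := Real.sqrt ((d : ℝ) - 1) with hs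
    set X : Set ℝ := {x : ℝ | ∃ (m : ℕ) (T : SimpleGraph (Fin m)) (u : Fin m → ℝ),
        T.IsTree ∧ MaxDegLE T d ∧ (∀ i, 0 ≤ u i) ∧ (∑ i, u i) = 1 ∧
        x = edgeSum T (fun i j => Real.sqrt (u i * u j))} with hX
    have hub : ∀ x ∈ X, x ≤ s := by
      rintro x ⟨m, T, u, hT, hdeg, hu, hsum, rfl⟩
      exact TreeAux.part_one d hd T hT hdeg u hu hsum
    have hmemk : ∀ k : ℕ, ((k:ℝ) * s / (k+1)) ∈ X := by
      intro k
      obtain ⟨m, T, u, h1, h2, h3, h4, h5⟩ := TreeAux.exists_good d hd k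
      exact ⟨m, T, u, h1, h2, h3, h4, h5.symm⟩
    have hne : X.Nonempty := ⟨_, hmemk 0⟩
    have hbdd : BddAbove X := ⟨s, fun x hx => hub x hx⟩
    have hd1 : (1:ℝ) ≤ (d:ℝ) - 1 := by
      have : (3:ℝ) ≤ (d:ℝ) := by exact_mod_cast hd
      linarith
    have hs0 : 0 < s := Real.sqrt_pos.mpr (by linarith)
    apply le_antisymm
    · exact csSup_le hne hub
    · by_contra hlt
      push_neg at hlt
      set c := sSup X with hc
      have hgap : 0 < s - c := by linarith
      obtain ⟨k, hk⟩ := exists_nat_gt (s / (s - c))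
      have hk1 : (0:ℝ) < (k:ℝ) + 1 := by positivity
      have hle : (k:ℝ) * s / (k+1) ≤ c := le_csSup hbdd (hmemk k)
      have e1 : s < (s - c) * k := by
        rwa [div_lt_iff₀ hgap, mul_comm] at hk
      have hle2 : (k:ℝ) * s ≤ c * ((k:ℝ) + 1) := by
        rwa [div_le_iff₀ hk1] at hle
      have e2 : s < s * k - c * k := by
        rw [sub_mul] at e1; linarith
      have e3 : c * ((k:ℝ) + 1) = c * k + c := by ring
      linarith
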